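/- Let Φ : ℝ^d → ℝ be smooth, V an open set with M_k := Σ_{2 ≤ |α| ≤ k} sup_{ξ∈V} |∂^α Φ(ξ)| < ∞ (convention M_1 = 1), and A = ∇Φ/|∇Φ|² on U := {ξ ∈ V : ∇Φ(ξ) ≠ 0}. Let T denote the first-order differential operator (the transpose of L = A·∇) defined by (T f)(ξ) = Σ_{i=1}^d ∂_i (A_i f)(ξ) for smooth f on U. Then for every N ∈ ℕ, N ≥ 1, there exist smooth functions c_{α,N} on U, indexed by multi-indices |α| ≤ N, such that: (1) T^N f = Σ_{|α| ≤ N} c_{α,N} ∂^α f for every smooth f on U; and (2) for every multi-index β there is a nondecreasing function F : [0,∞) → [0,∞) (depending only on d, N, α, β) with |∂^β c_{α,N}(ξ)| ≤ F(M_{N−|α|+|β|+1}) Σ_{k=N}^{2N−|α|+|β|} |∇Φ(ξ)|^{-k} for all ξ ∈ U. -/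

import Mathlib

/-- Partial derivative in the `i`-th coordinate direction. -/
noncomputable def pderiv' (d : ℕ) (i : Fin d) (f : EuclideanSpace ℝ (Fin d) → ℝ) :
    EuclideanSpace ℝ (Fin d) → ℝ :=
  fun ξ => fderiv ℝ f ξ (EuclideanSpace.single i 1)

/-- Iterated partial derivative along a list of coordinate directions. -/
noncomputable def mderiv (d : ℕ) : List (Fin d) →
    (EuclideanSpace ℝ (Fin d) → ℝ) → EuclideanSpace ℝ (Fin d) → ℝ
  | [], f => f
  | i :: l, f => pderiv' d i (mderiv d l f)

/-- The list of directions associated to a multi-index `α`. -/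
def mIdxList (d N : ℕ) (α : Fin d → Fin (N + 1)) : List (Fin d) :=
  (List.finRange d).flatMap fun i => List.replicate (α i : ℕ) i

/-- ∂^α, for a multi-index `α : Fin d → Fin (N+1)`. -/
noncomputable def mderivIdx (d N : ℕ) (α : Fin d → Fin (N + 1))
    (f : EuclideanSpace ℝ (Fin d) → ℝ) : EuclideanSpace ℝ (Fin d) → ℝ :=
  mderiv d (mIdxList d N α) f

/-- The phase seminorms `M_k` (with empty sum conventions). -/
noncomputable def phaseSemi (d k : ℕ) (V : Set (EuclideanSpace ℝ (Fin d)))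
    (Φ : EuclideanSpace ℝ (Fin d) → ℝ) : ℝ :=
  ∑ n ∈ Finset.Icc 2 k, sSup ((fun ξ => ‖iteratedFDeriv ℝ n Φ ξ‖) '' V)

/-- The transpose operator `T f = Σᵢ ∂ᵢ (Aᵢ f)` with `Aᵢ = ∂ᵢΦ/|∇Φ|²`. -/
noncomputable def transpOp (d : ℕ) (Φ : EuclideanSpace ℝ (Fin d) → ℝ)
    (f : EuclideanSpace ℝ (Fin d) → ℝ) : EuclideanSpace ℝ (Fin d) → ℝ :=
  fun ξ => ∑ i, pderiv' d i
    (fun η => fderiv ℝ Φ η (EuclideanSpace.single i 1) / ‖gradient Φ η‖ ^ 2 * f η) ξ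

namespace Aux
variable {d : ℕ}
abbrev Pt (d : ℕ) := EuclideanSpace ℝ (Fin d)
noncomputable def ee (d : ℕ) (i : Fin d) : Pt d := EuclideanSpace.single i 1

lemma norm_ee (i : Fin d) : ‖ee d i‖ = 1 := by
  simp [ee, EuclideanSpace.norm_single]

lemma topc : ((⊤:ℕ∞) : WithTop ℕ∞) + 1 ≤ ((⊤:ℕ∞) : WithTop ℕ∞) := by
  norm_cast

lemma mderiv_append (l₁ l₂ : List (Fin d)) (f : Pt d → ℝ) :
    mderiv d (l₁ ++ l₂) f = mderiv d l₁ (mderiv d l₂ f) := by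
  induction l₁ with
  | nil => rfl
  | cons a l ih => simp [mderiv, ih]

lemma pderiv'_zero (i : Fin d) : pderiv' d i (fun _ => (0:ℝ)) = fun _ => 0 := by
  funext ξ; simp [pderiv']

lemma mderiv_zero (l : List (Fin d)) : mderiv d l (fun _ => (0:ℝ)) = fun _ => 0 := by
  induction l with
  | nil => rfl
  | cons a l ih => simp [mderiv, ih, pderiv'_zero]

lemma pderiv'_congr_nhds {f g : Pt d → ℝ} {ξ : Pt d} (h : f =ᶠ[nhds ξ] g) (i : Fin d) :
    pderiv' d i f =ᶠ[nhds ξ] pderiv' d i g := by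
  filter_upwards [h.fderiv (𝕜 := ℝ)] with η hη
  simp [pderiv', hη]

lemma mderiv_congr_nhds {f g : Pt d → ℝ} {ξ : Pt d} (h : f =ᶠ[nhds ξ] g) (l : List (Fin d)) :
    mderiv d l f =ᶠ[nhds ξ] mderiv d l g := by
  induction l with
  | nil => exact h
  | cons a l ih => exact pderiv'_congr_nhds ih a

lemma mderiv_congr_on {U : Set (Pt d)} (hU : IsOpen U) {f g : Pt d → ℝ}
    (h : Set.EqOn f g U) (l : List (Fin d)) : Set.EqOn (mderiv d l f) (mderiv d l g) U := by
  intro ξ hξ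
  exact (mderiv_congr_nhds (Filter.eventuallyEq_of_mem (hU.mem_nhds hξ) h) l).eq_of_nhds

lemma pderiv'_contDiffOn {U : Set (Pt d)} (hU : IsOpen U) {f : Pt d → ℝ}
    (hf : ContDiffOn ℝ (⊤:ℕ∞) f U) (i : Fin d) : ContDiffOn ℝ (⊤:ℕ∞) (pderiv' d i f) U := by
  have h1 : ContDiffOn ℝ (⊤:ℕ∞) (fun ξ => fderiv ℝ f ξ) U := hf.fderiv_of_isOpen hU topc
  exact h1.clm_apply contDiffOn_const

lemma mderiv_contDiffOn {U : Set (Pt d)} (hU : IsOpen U) {f : Pt d → ℝ}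
    (hf : ContDiffOn ℝ (⊤:ℕ∞) f U) (l : List (Fin d)) :
    ContDiffOn ℝ (⊤:ℕ∞) (mderiv d l f) U := by
  induction l with
  | nil => exact hf
  | cons a l ih => exact pderiv'_contDiffOn hU ih a

lemma diffAt {U : Set (Pt d)} (hU : IsOpen U) {f : Pt d → ℝ}
    (hf : ContDiffOn ℝ (⊤:ℕ∞) f U) {ξ : Pt d} (hξ : ξ ∈ U) : DifferentiableAt ℝ f ξ :=
  ((hf ξ hξ).contDiffAt (hU.mem_nhds hξ)).differentiableAt (by simp)


lemma pderiv'_add {f g : Pt d → ℝ} {ξ : Pt d} (hf : DifferentiableAt ℝ f ξ)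
    (hg : DifferentiableAt ℝ g ξ) (i : Fin d) :
    pderiv' d i (fun η => f η + g η) ξ = pderiv' d i f ξ + pderiv' d i g ξ := by
  simp [pderiv', fderiv_fun_add hf hg]

lemma pderiv'_mul {f g : Pt d → ℝ} {ξ : Pt d} (hf : DifferentiableAt ℝ f ξ)
    (hg : DifferentiableAt ℝ g ξ) (i : Fin d) :
    pderiv' d i (fun η => f η * g η) ξ = pderiv' d i f ξ * g ξ + f ξ * pderiv' d i g ξ := by
  simp [pderiv', fderiv_fun_mul hf hg]; ring

lemma pderiv'_const_mul {f : Pt d → ℝ} {ξ : Pt d} (hf : DifferentiableAt ℝ f ξ)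
    (c : ℝ) (i : Fin d) :
    pderiv' d i (fun η => c * f η) ξ = c * pderiv' d i f ξ := by
  simp [pderiv', fderiv_const_mul hf]

lemma pderiv'_finsetSum {ι : Type*} (s : Finset ι) {g : ι → Pt d → ℝ} {ξ : Pt d}
    (hg : ∀ j ∈ s, DifferentiableAt ℝ (g j) ξ) (i : Fin d) :
    pderiv' d i (fun η => ∑ j ∈ s, g j η) ξ = ∑ j ∈ s, pderiv' d i (g j) ξ := by
  simp [pderiv', fderiv_fun_sum hg]

lemma mderiv_add_on {U : Set (Pt d)} (hU : IsOpen U) {f g : Pt d → ℝ}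
    (hf : ContDiffOn ℝ (⊤:ℕ∞) f U) (hg : ContDiffOn ℝ (⊤:ℕ∞) g U) (l : List (Fin d)) :
    ∀ ξ ∈ U, mderiv d l (fun η => f η + g η) ξ = mderiv d l f ξ + mderiv d l g ξ := by
  induction l with
  | nil => intro ξ _; rfl
  | cons a l ih =>
    intro ξ hξ
    have h1 : mderiv d l (fun η => f η + g η) =ᶠ[nhds ξ]
        (fun η => mderiv d l f η + mderiv d l g η) :=
      Filter.eventuallyEq_of_mem (hU.mem_nhds hξ) (fun η hη => ih η hη)
    calc mderiv d (a :: l) (fun η => f η + g η) ξ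
        = pderiv' d a (fun η => mderiv d l f η + mderiv d l g η) ξ :=
          (pderiv'_congr_nhds h1 a).eq_of_nhds
      _ = _ := pderiv'_add (diffAt hU (mderiv_contDiffOn hU hf l) hξ)
          (diffAt hU (mderiv_contDiffOn hU hg l) hξ) a

lemma mderiv_const_mul_on {U : Set (Pt d)} (hU : IsOpen U) {f : Pt d → ℝ}
    (hf : ContDiffOn ℝ (⊤:ℕ∞) f U) (c : ℝ) (l : List (Fin d)) :
    ∀ ξ ∈ U, mderiv d l (fun η => c * f η) ξ = c * mderiv d l f ξ := by
  induction l with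
  | nil => intro ξ _; rfl
  | cons a l ih =>
    intro ξ hξ
    have h1 : mderiv d l (fun η => c * f η) =ᶠ[nhds ξ] (fun η => c * mderiv d l f η) :=
      Filter.eventuallyEq_of_mem (hU.mem_nhds hξ) (fun η hη => ih η hη)
    calc mderiv d (a :: l) (fun η => c * f η) ξ
        = pderiv' d a (fun η => c * mderiv d l f η) ξ := (pderiv'_congr_nhds h1 a).eq_of_nhds
      _ = _ := pderiv'_const_mul (diffAt hU (mderiv_contDiffOn hU hf l) hξ) c a

lemma mderiv_finsetSum_on {U : Set (Pt d)} (hU : IsOpen U) {ι : Type*} (s : Finset ι)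
    {g : ι → Pt d → ℝ} (hg : ∀ j ∈ s, ContDiffOn ℝ (⊤:ℕ∞) (g j) U) (l : List (Fin d)) :
    ∀ ξ ∈ U, mderiv d l (fun η => ∑ j ∈ s, g j η) ξ = ∑ j ∈ s, mderiv d l (g j) ξ := by
  induction l with
  | nil => intro ξ _; rfl
  | cons a l ih =>
    intro ξ hξ
    have h1 : mderiv d l (fun η => ∑ j ∈ s, g j η) =ᶠ[nhds ξ]
        (fun η => ∑ j ∈ s, mderiv d l (g j) η) :=
      Filter.eventuallyEq_of_mem (hU.mem_nhds hξ) (fun η hη => ih η hη)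
    calc mderiv d (a :: l) (fun η => ∑ j ∈ s, g j η) ξ
        = pderiv' d a (fun η => ∑ j ∈ s, mderiv d l (g j) η) ξ :=
          (pderiv'_congr_nhds h1 a).eq_of_nhds
      _ = _ := pderiv'_finsetSum s
          (fun j hj => diffAt hU (mderiv_contDiffOn hU (hg j hj) l) hξ) a

lemma mderiv_eq_iteratedFDeriv {f : Pt d → ℝ} (hf : ContDiff ℝ (⊤:ℕ∞) f)
    (l : List (Fin d)) (ξ : Pt d) :
    mderiv d l f ξ = iteratedFDeriv ℝ l.length f ξ (fun j => ee d (l.get j)) := by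
  induction l generalizing ξ with
  | nil => simp [mderiv, iteratedFDeriv_zero_apply]
  | cons a l ih =>
    have hdiff : Differentiable ℝ (iteratedFDeriv ℝ l.length f) :=
      hf.differentiable_iteratedFDeriv (by exact_mod_cast WithTop.coe_lt_top _)
    have h1 : mderiv d l f = fun η =>
        (ContinuousMultilinearMap.apply ℝ (fun _ : Fin l.length => Pt d) ℝ
          (fun j => ee d (l.get j))) (iteratedFDeriv ℝ l.length f η) := by
      funext η; exact ih η
    have h2 : fderiv ℝ (mderiv d l f) ξ = (ContinuousMultilinearMap.apply ℝ
        (fun _ : Fin l.length => Pt d) ℝ (fun j => ee d (l.get j))).comp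
        (fderiv ℝ (iteratedFDeriv ℝ l.length f) ξ) := by
      rw [h1]
      exact (((ContinuousMultilinearMap.apply ℝ _ ℝ _).hasFDerivAt).comp ξ
        (hdiff ξ).hasFDerivAt).fderiv
    show fderiv ℝ (mderiv d l f) ξ (ee d a)
        = iteratedFDeriv ℝ (l.length + 1) f ξ (fun j => ee d ((a :: l).get j))
    rw [h2, iteratedFDeriv_succ_apply_left]
    rfl

lemma abs_mderiv_le_norm_iteratedFDeriv {f : Pt d → ℝ} (hf : ContDiff ℝ (⊤:ℕ∞) f)
    (l : List (Fin d)) (ξ : Pt d) :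
    |mderiv d l f ξ| ≤ ‖iteratedFDeriv ℝ l.length f ξ‖ := by
  rw [mderiv_eq_iteratedFDeriv hf l ξ]
  calc |iteratedFDeriv ℝ l.length f ξ (fun j => ee d (l.get j))|
      ≤ ‖iteratedFDeriv ℝ l.length f ξ‖ * ∏ j : Fin l.length, ‖ee d (l.get j)‖ :=
        (iteratedFDeriv ℝ l.length f ξ).le_opNorm _
    _ = ‖iteratedFDeriv ℝ l.length f ξ‖ := by simp [norm_ee]

-- phaseSemi lemmas (phaseSemi def lives outside the namespace)
lemma phaseSemi_nonneg (k : ℕ) (V : Set (Pt d)) (Φ : Pt d → ℝ) :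
    0 ≤ phaseSemi d k V Φ := by
  apply Finset.sum_nonneg
  intro n _
  apply Real.sSup_nonneg
  rintro x ⟨ξ, _, rfl⟩
  exact norm_nonneg _

lemma phaseSemi_mono {k k' : ℕ} (h : k ≤ k') (V : Set (Pt d)) (Φ : Pt d → ℝ) :
    phaseSemi d k V Φ ≤ phaseSemi d k' V Φ := by
  apply Finset.sum_le_sum_of_subset_of_nonneg (Finset.Icc_subset_Icc le_rfl h)
  intro n _ _
  apply Real.sSup_nonneg
  rintro x ⟨ξ, _, rfl⟩
  exact norm_nonneg _

lemma norm_iteratedFDeriv_le_phaseSemi {V : Set (Pt d)} {Φ : Pt d → ℝ}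
    (hbdd : ∀ k : ℕ, BddAbove ((fun ξ => ‖iteratedFDeriv ℝ k Φ ξ‖) '' V))
    {m k : ℕ} (h2 : 2 ≤ m) (hmk : m ≤ k) {ξ : Pt d} (hξ : ξ ∈ V) :
    ‖iteratedFDeriv ℝ m Φ ξ‖ ≤ phaseSemi d k V Φ := by
  have h1 : ‖iteratedFDeriv ℝ m Φ ξ‖ ≤ sSup ((fun ξ => ‖iteratedFDeriv ℝ m Φ ξ‖) '' V) :=
    le_csSup (hbdd m) ⟨ξ, hξ, rfl⟩
  refine h1.trans ?_
  apply Finset.single_le_sum (f := fun n => sSup ((fun ξ => ‖iteratedFDeriv ℝ n Φ ξ‖) '' V))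
  · intro n _
    apply Real.sSup_nonneg
    rintro x ⟨η, _, rfl⟩
    exact norm_nonneg _
  · exact Finset.mem_Icc.2 ⟨h2, hmk⟩

-- gradient lemmas
lemma fderiv_apply_eq_inner (Φ : Pt d → ℝ) (ξ v : Pt d) :
    fderiv ℝ Φ ξ v = inner ℝ (gradient Φ ξ) v := by
  rw [gradient, ← InnerProductSpace.toDual_apply_apply]
  simp

lemma abs_pderiv'_le_norm_gradient (Φ : Pt d → ℝ) (ξ : Pt d) (i : Fin d) :
    |pderiv' d i Φ ξ| ≤ ‖gradient Φ ξ‖ := by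
  have : pderiv' d i Φ ξ = inner ℝ (gradient Φ ξ) (ee d i) := fderiv_apply_eq_inner Φ ξ _
  rw [this]
  calc |(inner ℝ (gradient Φ ξ) (ee d i) : ℝ)| ≤ ‖gradient Φ ξ‖ * ‖ee d i‖ :=
        abs_real_inner_le_norm _ _
    _ = ‖gradient Φ ξ‖ := by rw [norm_ee, mul_one]

lemma gradient_contDiff {Φ : Pt d → ℝ} (hΦ : ContDiff ℝ (⊤:ℕ∞) Φ) :
    ContDiff ℝ (⊤:ℕ∞) (fun ξ => gradient Φ ξ) := by
  unfold gradient
  exact (InnerProductSpace.toDual ℝ (Pt d)).symm.contDiff.comp (hΦ.fderiv_right topc)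

lemma normSq_gradient_contDiff {Φ : Pt d → ℝ} (hΦ : ContDiff ℝ (⊤:ℕ∞) Φ) :
    ContDiff ℝ (⊤:ℕ∞) (fun ξ => ‖gradient Φ ξ‖ ^ 2) :=
  (gradient_contDiff hΦ).norm_sq (𝕜 := ℝ)


lemma diffAt' {U : Set (Pt d)} (hU : IsOpen U) {G : Type*} [NormedAddCommGroup G]
    [NormedSpace ℝ G] {f : Pt d → G}
    (hf : ContDiffOn ℝ (⊤:ℕ∞) f U) {ξ : Pt d} (hξ : ξ ∈ U) : DifferentiableAt ℝ f ξ :=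
  ((hf ξ hξ).contDiffAt (hU.mem_nhds hξ)).differentiableAt (by simp)
lemma pderiv'_pderiv'_eq {U : Set (Pt d)} (hU : IsOpen U) {f : Pt d → ℝ}
    (hf : ContDiffOn ℝ (⊤:ℕ∞) f U) {ξ : Pt d} (hξ : ξ ∈ U) (i j : Fin d) :
    pderiv' d i (pderiv' d j f) ξ = fderiv ℝ (fderiv ℝ f) ξ (ee d i) (ee d j) := by
  have hfd : ContDiffOn ℝ (⊤:ℕ∞) (fun η => fderiv ℝ f η) U := hf.fderiv_of_isOpen hU topc
  have hdc : DifferentiableAt ℝ (fun η => fderiv ℝ f η) ξ := diffAt' hU hfd hξ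
  have : pderiv' d j f = fun η => (fderiv ℝ f η) (ee d j) := rfl
  rw [show pderiv' d i (pderiv' d j f) ξ
      = fderiv ℝ (fun η => (fderiv ℝ f η) (ee d j)) ξ (ee d i) from rfl]
  rw [fderiv_clm_apply hdc (differentiableAt_const _)]
  simp

lemma pderiv'_comm {U : Set (Pt d)} (hU : IsOpen U) {f : Pt d → ℝ}
    (hf : ContDiffOn ℝ (⊤:ℕ∞) f U) {ξ : Pt d} (hξ : ξ ∈ U) (i j : Fin d) :
    pderiv' d i (pderiv' d j f) ξ = pderiv' d j (pderiv' d i f) ξ := by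
  have hat : ContDiffAt ℝ 2 f ξ := ((hf ξ hξ).contDiffAt (hU.mem_nhds hξ)).of_le
    (by rw [show ((2:WithTop ℕ∞)) = ((2:ℕ∞) : WithTop ℕ∞) by norm_cast]
        exact_mod_cast (le_top : (2:ℕ∞) ≤ ⊤))
  have hsym := hat.isSymmSndFDerivAt (by simp)
  rw [pderiv'_pderiv'_eq hU hf hξ i j, pderiv'_pderiv'_eq hU hf hξ j i]
  exact hsym _ _

lemma mderiv_perm {U : Set (Pt d)} (hU : IsOpen U) {f : Pt d → ℝ}
    (hf : ContDiffOn ℝ (⊤:ℕ∞) f U) {l₁ l₂ : List (Fin d)} (hp : l₁.Perm l₂) :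
    Set.EqOn (mderiv d l₁ f) (mderiv d l₂ f) U := by
  induction hp with
  | nil => exact fun ξ _ => rfl
  | @cons x l₁ l₂ _ ih =>
    intro ξ hξ
    show pderiv' d x (mderiv d l₁ f) ξ = pderiv' d x (mderiv d l₂ f) ξ
    exact (pderiv'_congr_nhds (Filter.eventuallyEq_of_mem (hU.mem_nhds hξ) ih) x).eq_of_nhds
  | swap x y l =>
    intro ξ hξ
    exact pderiv'_comm hU (mderiv_contDiffOn hU hf l) hξ y x
  | trans _ _ ih₁ ih₂ => exact fun ξ hξ => (ih₁ hξ).trans (ih₂ hξ)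

def leib : List (Fin d) → List (List (Fin d) × List (Fin d))
  | [] => [([], [])]
  | i :: l => ((leib l).map fun p => (i :: p.1, p.2)) ++ ((leib l).map fun p => (p.1, i :: p.2))

lemma leib_len {l : List (Fin d)} : ∀ p ∈ leib l, p.1.length + p.2.length = l.length := by
  induction l with
  | nil => intro p hp; simp [leib] at hp; simp [hp]
  | cons a l ih =>
    intro p hp
    simp only [leib, List.mem_append, List.mem_map] at hp
    rcases hp with ⟨q, hq, rfl⟩ | ⟨q, hq, rfl⟩ <;>
      · have := ih q hq
        simp only [List.length_cons]
        omega

lemma diffAt_listSum {ξ : Pt d} (L : List (Pt d → ℝ)) (hd : ∀ h ∈ L, DifferentiableAt ℝ h ξ) :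
    DifferentiableAt ℝ (fun η => (L.map (fun h => h η)).sum) ξ := by
  induction L with
  | nil =>
    simp only [List.map_nil, List.sum_nil]
    exact differentiableAt_const 0
  | cons h L ih =>
    simp only [List.map_cons, List.sum_cons]
    exact (hd h (by simp)).add (ih fun h' hh' => hd h' (by simp [hh']))

lemma pderiv'_listSum {ξ : Pt d} (L : List (Pt d → ℝ))
    (hd : ∀ h ∈ L, DifferentiableAt ℝ h ξ) (i : Fin d) :
    pderiv' d i (fun η => (L.map (fun h => h η)).sum) ξ
      = (L.map (fun h => pderiv' d i h ξ)).sum := by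
  induction L with
  | nil => simp [pderiv']
  | cons h L ih =>
    simp only [List.map_cons, List.sum_cons]
    rw [pderiv'_add (hd h (by simp)) (diffAt_listSum L fun h' hh' => hd h' (by simp [hh'])) i,
      ih fun h' hh' => hd h' (by simp [hh'])]

lemma mderiv_mul_on {U : Set (Pt d)} (hU : IsOpen U) {f g : Pt d → ℝ}
    (hf : ContDiffOn ℝ (⊤:ℕ∞) f U) (hg : ContDiffOn ℝ (⊤:ℕ∞) g U) (l : List (Fin d)) :
    ∀ ξ ∈ U, mderiv d l (fun η => f η * g η) ξ
      = ((leib l).map (fun p => mderiv d p.1 f ξ * mderiv d p.2 g ξ)).sum := by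
  induction l with
  | nil => intro ξ _; simp [leib, mderiv]
  | cons a l ih =>
    intro ξ hξ
    have h1 : mderiv d l (fun η => f η * g η) =ᶠ[nhds ξ]
        (fun η => (((leib l).map fun p => fun η' =>
          mderiv d p.1 f η' * mderiv d p.2 g η').map (fun h => h η)).sum) := by
      apply Filter.eventuallyEq_of_mem (hU.mem_nhds hξ)
      intro η hη
      simpa only [List.map_map, Function.comp_def] using ih η hη
    have hdiffs : ∀ h ∈ (leib l).map fun p => fun η' =>
        mderiv d p.1 f η' * mderiv d p.2 g η', DifferentiableAt ℝ h ξ := by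
      intro h hh
      simp only [List.mem_map] at hh
      obtain ⟨p, _, rfl⟩ := hh
      exact (diffAt hU (mderiv_contDiffOn hU hf p.1) hξ).mul
        (diffAt hU (mderiv_contDiffOn hU hg p.2) hξ)
    calc mderiv d (a :: l) (fun η => f η * g η) ξ
        = pderiv' d a (fun η => (((leib l).map fun p => fun η' =>
            mderiv d p.1 f η' * mderiv d p.2 g η').map (fun h => h η)).sum) ξ :=
          (pderiv'_congr_nhds h1 a).eq_of_nhds
      _ = (((leib l).map fun p => fun η' => mderiv d p.1 f η' * mderiv d p.2 g η').map
            (fun h => pderiv' d a h ξ)).sum := pderiv'_listSum _ hdiffs a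
      _ = ((leib l).map (fun p => mderiv d (a :: p.1) f ξ * mderiv d p.2 g ξ
            + mderiv d p.1 f ξ * mderiv d (a :: p.2) g ξ)).sum := by
          rw [List.map_map]
          congr 1
          apply List.map_congr_left
          intro p hp
          show pderiv' d a (fun η' => mderiv d p.1 f η' * mderiv d p.2 g η') ξ = _
          exact pderiv'_mul (diffAt hU (mderiv_contDiffOn hU hf p.1) hξ)
            (diffAt hU (mderiv_contDiffOn hU hg p.2) hξ) a
      _ = ((leib (a :: l)).map (fun p => mderiv d p.1 f ξ * mderiv d p.2 g ξ)).sum := by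
          simp only [leib, List.map_append, List.sum_append, List.map_map]
          rw [← List.sum_map_add]
          rfl

def Hyp (Φ : Pt d → ℝ) (V : Set (Pt d)) : Prop :=
  ContDiff ℝ (⊤:ℕ∞) Φ ∧ IsOpen V ∧
    ∀ k : ℕ, BddAbove ((fun ξ => ‖iteratedFDeriv ℝ k Φ ξ‖) '' V)

def uset (Φ : Pt d → ℝ) (V : Set (Pt d)) : Set (Pt d) := {ξ | ξ ∈ V ∧ gradient Φ ξ ≠ 0}

lemma uset_open {Φ : Pt d → ℝ} {V : Set (Pt d)} (h : Hyp Φ V) : IsOpen (uset Φ V) := by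
  have : uset Φ V = V ∩ (fun ξ => gradient Φ ξ) ⁻¹' ({0}ᶜ) := by
    ext ξ; simp [uset]
  rw [this]
  exact h.2.1.inter (isOpen_compl_singleton.preimage (gradient_contDiff h.1).continuous)

lemma norm_grad_pos {Φ : Pt d → ℝ} {V : Set (Pt d)} {ξ : Pt d} (hξ : ξ ∈ uset Φ V) :
    0 < ‖gradient Φ ξ‖ := norm_pos_iff.2 hξ.2

noncomputable def Sgr (Φ : Pt d → ℝ) (lo hi : ℕ) (ξ : Pt d) : ℝ :=
  ∑ k ∈ Finset.Icc lo hi, (‖gradient Φ ξ‖ ^ k)⁻¹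

lemma Sgr_nonneg (Φ : Pt d → ℝ) (lo hi : ℕ) (ξ : Pt d) : 0 ≤ Sgr Φ lo hi ξ :=
  Finset.sum_nonneg fun k _ => by positivity

lemma Sgr_mono {lo lo' hi hi' : ℕ} (h1 : lo' ≤ lo) (h2 : hi ≤ hi')
    (Φ : Pt d → ℝ) (ξ : Pt d) : Sgr Φ lo hi ξ ≤ Sgr Φ lo' hi' ξ :=
  Finset.sum_le_sum_of_subset_of_nonneg (Finset.Icc_subset_Icc h1 h2)
    (fun k _ _ => by positivity)

lemma single_le_Sgr {lo hi k : ℕ} (hk : k ∈ Finset.Icc lo hi) (Φ : Pt d → ℝ) (ξ : Pt d) :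
    (‖gradient Φ ξ‖ ^ k)⁻¹ ≤ Sgr Φ lo hi ξ := by
  unfold Sgr
  exact Finset.single_le_sum (f := fun k => (‖gradient Φ ξ‖ ^ k)⁻¹)
    (fun j _ => by positivity) hk

lemma Sgr_ge_one {hi : ℕ} (Φ : Pt d → ℝ) (ξ : Pt d) : 1 ≤ Sgr Φ 0 hi ξ := by
  have := single_le_Sgr (k := 0) (by simp) Φ ξ (lo := 0) (hi := hi)
  simpa using this

lemma Sgr_mul_le (Φ : Pt d → ℝ) (lo1 hi1 lo2 hi2 : ℕ) (ξ : Pt d) :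
    Sgr Φ lo1 hi1 ξ * Sgr Φ lo2 hi2 ξ
      ≤ ((hi1+1) * (hi2+1) : ℝ) * Sgr Φ (lo1+lo2) (hi1+hi2) ξ := by
  rw [Sgr, Sgr, Finset.sum_mul_sum]
  have key : ∀ k1 ∈ Finset.Icc lo1 hi1, ∀ k2 ∈ Finset.Icc lo2 hi2,
      (‖gradient Φ ξ‖ ^ k1)⁻¹ * (‖gradient Φ ξ‖ ^ k2)⁻¹
        ≤ Sgr Φ (lo1+lo2) (hi1+hi2) ξ := by
    intro k1 hk1 k2 hk2
    rw [← mul_inv, ← pow_add]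
    apply single_le_Sgr
    simp only [Finset.mem_Icc] at hk1 hk2 ⊢
    omega
  calc ∑ k1 ∈ Finset.Icc lo1 hi1, ∑ k2 ∈ Finset.Icc lo2 hi2,
        (‖gradient Φ ξ‖ ^ k1)⁻¹ * (‖gradient Φ ξ‖ ^ k2)⁻¹
      ≤ ∑ k1 ∈ Finset.Icc lo1 hi1, ∑ k2 ∈ Finset.Icc lo2 hi2,
        Sgr Φ (lo1+lo2) (hi1+hi2) ξ := by
        apply Finset.sum_le_sum
        intro k1 hk1
        exact Finset.sum_le_sum fun k2 hk2 => key k1 hk1 k2 hk2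
    _ = ((Finset.Icc lo1 hi1).card * (Finset.Icc lo2 hi2).card : ℝ)
          * Sgr Φ (lo1+lo2) (hi1+hi2) ξ := by
        simp [Finset.sum_const, mul_assoc]
    _ ≤ ((hi1+1) * (hi2+1) : ℝ) * Sgr Φ (lo1+lo2) (hi1+hi2) ξ := by
        apply mul_le_mul_of_nonneg_right _ (Sgr_nonneg _ _ _ _)
        have c1 : (Finset.Icc lo1 hi1).card ≤ hi1 + 1 := by
          rw [Nat.card_Icc]; omega
        have c2 : (Finset.Icc lo2 hi2).card ≤ hi2 + 1 := by
          rw [Nat.card_Icc]; omega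
        have := mul_le_mul c1 c2 (Nat.zero_le _) (Nat.zero_le _)
        exact_mod_cast this

def GoodUpto (n lo hi ord : ℕ) (c : (Pt d → ℝ) → Pt d → ℝ) : Prop :=
  (∀ Φ V, Hyp Φ V → ContDiffOn ℝ (⊤:ℕ∞) (c Φ) (uset Φ V)) ∧
  ∀ β : List (Fin d), β.length ≤ n → ∃ F : ℝ → ℝ, Monotone F ∧ (∀ x, 0 ≤ F x) ∧
    ∀ Φ V, Hyp Φ V → ∀ ξ ∈ uset Φ V,
      |mderiv d β (c Φ) ξ| ≤ F (phaseSemi d (ord + β.length) V Φ) * Sgr Φ lo (hi + β.length) ξ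

lemma good_weaken {n lo hi ord lo' hi' ord' : ℕ} {c : (Pt d → ℝ) → Pt d → ℝ}
    (h1 : lo' ≤ lo) (h2 : hi ≤ hi') (h3 : ord ≤ ord')
    (hg : GoodUpto n lo hi ord c) : GoodUpto n lo' hi' ord' c := by
  refine ⟨hg.1, fun β hβ => ?_⟩
  obtain ⟨F, hFm, hFp, hF⟩ := hg.2 β hβ
  refine ⟨F, hFm, hFp, fun Φ V hyp ξ hξ => ?_⟩
  calc |mderiv d β (c Φ) ξ| ≤ F (phaseSemi d (ord + β.length) V Φ)
        * Sgr Φ lo (hi + β.length) ξ := hF Φ V hyp ξ hξ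
    _ ≤ F (phaseSemi d (ord' + β.length) V Φ) * Sgr Φ lo' (hi' + β.length) ξ :=
        mul_le_mul (hFm (phaseSemi_mono (by omega) V Φ))
          (Sgr_mono h1 (by omega) Φ ξ) (Sgr_nonneg _ _ _ _) (hFp _)

lemma good_zero {n lo hi ord : ℕ} :
    GoodUpto (d := d) n lo hi ord (fun _ _ => (0:ℝ)) := by
  refine ⟨fun Φ V _ => contDiffOn_const, fun β _ => ⟨fun _ => 0, monotone_const,
    fun _ => le_rfl, fun Φ V hyp ξ hξ => ?_⟩⟩
  rw [mderiv_zero]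
  simp [Sgr_nonneg]

lemma good_add {n lo hi ord : ℕ} {c₁ c₂ : (Pt d → ℝ) → Pt d → ℝ}
    (hg₁ : GoodUpto n lo hi ord c₁) (hg₂ : GoodUpto n lo hi ord c₂) :
    GoodUpto n lo hi ord (fun Φ ξ => c₁ Φ ξ + c₂ Φ ξ) := by
  refine ⟨fun Φ V hyp => (hg₁.1 Φ V hyp).add (hg₂.1 Φ V hyp), fun β hβ => ?_⟩
  obtain ⟨F₁, hm₁, hp₁, hF₁⟩ := hg₁.2 β hβ
  obtain ⟨F₂, hm₂, hp₂, hF₂⟩ := hg₂.2 β hβ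
  refine ⟨F₁ + F₂, hm₁.add hm₂, fun x => add_nonneg (hp₁ x) (hp₂ x),
    fun Φ V hyp ξ hξ => ?_⟩
  have heq := mderiv_add_on (uset_open hyp) (hg₁.1 Φ V hyp) (hg₂.1 Φ V hyp) β ξ hξ
  calc |mderiv d β (fun η => c₁ Φ η + c₂ Φ η) ξ|
      = |mderiv d β (c₁ Φ) ξ + mderiv d β (c₂ Φ) ξ| := by rw [heq]
    _ ≤ |mderiv d β (c₁ Φ) ξ| + |mderiv d β (c₂ Φ) ξ| := abs_add_le _ _
    _ ≤ _ := by
        have := add_le_add (hF₁ Φ V hyp ξ hξ) (hF₂ Φ V hyp ξ hξ)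
        calc |mderiv d β (c₁ Φ) ξ| + |mderiv d β (c₂ Φ) ξ|
            ≤ F₁ (phaseSemi d (ord + β.length) V Φ) * Sgr Φ lo (hi + β.length) ξ
              + F₂ (phaseSemi d (ord + β.length) V Φ) * Sgr Φ lo (hi + β.length) ξ := this
          _ = _ := by simp [Pi.add_apply, add_mul]

lemma good_const_mul {n lo hi ord : ℕ} {c : (Pt d → ℝ) → Pt d → ℝ} (r : ℝ)
    (hg : GoodUpto n lo hi ord c) : GoodUpto n lo hi ord (fun Φ ξ => r * c Φ ξ) := by
  refine ⟨fun Φ V hyp => (hg.1 Φ V hyp).const_smul r, fun β hβ => ?_⟩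
  obtain ⟨F, hm, hp, hF⟩ := hg.2 β hβ
  refine ⟨fun x => |r| * F x, fun x y hxy => by
      exact mul_le_mul_of_nonneg_left (hm hxy) (abs_nonneg r),
    fun x => mul_nonneg (abs_nonneg r) (hp x), fun Φ V hyp ξ hξ => ?_⟩
  have heq := mderiv_const_mul_on (uset_open hyp) (hg.1 Φ V hyp) r β ξ hξ
  rw [heq, abs_mul, mul_assoc]
  exact mul_le_mul_of_nonneg_left (hF Φ V hyp ξ hξ) (abs_nonneg r)

lemma good_sum {n lo hi ord : ℕ} {ι : Type*} [DecidableEq ι] (s : Finset ι)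
    {c : ι → (Pt d → ℝ) → Pt d → ℝ} (hc : ∀ j ∈ s, GoodUpto n lo hi ord (c j)) :
    GoodUpto n lo hi ord (fun Φ ξ => ∑ j ∈ s, c j Φ ξ) := by
  induction s using Finset.induction_on with
  | empty => simpa using (good_zero (d := d) (n := n) (lo := lo) (hi := hi) (ord := ord))
  | @insert a s ha ih =>
    have : GoodUpto n lo hi ord (fun Φ ξ => c a Φ ξ + ∑ j ∈ s, c j Φ ξ) :=
      good_add (hc a (by simp)) (ih fun j hj => hc j (by simp [hj]))
    simpa [Finset.sum_insert ha] using this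

lemma abs_listSum_le (L : List ℝ) : |L.sum| ≤ (L.map abs).sum := by
  induction L with
  | nil => simp
  | cons a L ih =>
    simp only [List.sum_cons, List.map_cons]
    exact (abs_add_le _ _).trans (by linarith)

lemma good_mul {n lo1 hi1 ord1 lo2 hi2 ord2 : ℕ} {c1 c2 : (Pt d → ℝ) → Pt d → ℝ}
    (h1 : GoodUpto n lo1 hi1 ord1 c1) (h2 : GoodUpto n lo2 hi2 ord2 c2) :
    GoodUpto n (lo1+lo2) (hi1+hi2) (max ord1 ord2) (fun Φ ξ => c1 Φ ξ * c2 Φ ξ) := by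
  refine ⟨fun Φ V hyp => (h1.1 Φ V hyp).mul (h2.1 Φ V hyp), fun β hβ => ?_⟩
  choose F1 hm1 hp1 hb1 using h1.2
  choose F2 hm2 hp2 hb2 using h2.2
  have len1 : ∀ p ∈ leib β, p.1.length ≤ n := fun p hp => by
    have := leib_len (d := d) p hp; omega
  have len2 : ∀ p ∈ leib β, p.2.length ≤ n := fun p hp => by
    have := leib_len (d := d) p hp; omega
  set C : ℝ := ((hi1 + n + 1) * (hi2 + n + 1) : ℝ) with hC
  have hC0 : 0 ≤ C := by positivity
  refine ⟨fun x => (((leib β).attach).map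
    (fun q => C * (F1 q.1.1 (len1 q.1 q.2) x * F2 q.1.2 (len2 q.1 q.2) x))).sum,
    ?_, ?_, ?_⟩
  · intro x y hxy
    apply List.sum_le_sum
    intro q _
    exact mul_le_mul_of_nonneg_left
      (mul_le_mul (hm1 _ _ hxy) (hm2 _ _ hxy) (hp2 _ _ x) (hp1 _ _ y)) hC0
  · intro x
    apply List.sum_nonneg
    intro a ha
    simp only [List.mem_map] at ha
    obtain ⟨q, _, rfl⟩ := ha
    exact mul_nonneg hC0 (mul_nonneg (hp1 _ _ x) (hp2 _ _ x))
  · intro Φ V hyp ξ hξ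
    set X := phaseSemi d (max ord1 ord2 + β.length) V Φ with hX
    have heq := mderiv_mul_on (uset_open hyp) (h1.1 Φ V hyp) (h2.1 Φ V hyp) β ξ hξ
    rw [heq]
    have key : ∀ q : {p // p ∈ leib β},
        |mderiv d q.1.1 (c1 Φ) ξ * mderiv d q.1.2 (c2 Φ) ξ|
          ≤ C * (F1 q.1.1 (len1 q.1 q.2) X * F2 q.1.2 (len2 q.1 q.2) X)
            * Sgr Φ (lo1+lo2) (hi1+hi2+β.length) ξ := by
      rintro ⟨p, hp⟩
      have e1 := hb1 p.1 (len1 p hp) Φ V hyp ξ hξ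
      have e2 := hb2 p.2 (len2 p hp) Φ V hyp ξ hξ
      have hm1' : F1 p.1 (len1 p hp) (phaseSemi d (ord1 + p.1.length) V Φ)
          ≤ F1 p.1 (len1 p hp) X := by
        apply hm1
        apply phaseSemi_mono
        have := leib_len (d := d) p hp
        omega
      have hm2' : F2 p.2 (len2 p hp) (phaseSemi d (ord2 + p.2.length) V Φ)
          ≤ F2 p.2 (len2 p hp) X := by
        apply hm2
        apply phaseSemi_mono
        have := leib_len (d := d) p hp
        omega
      calc |mderiv d p.1 (c1 Φ) ξ * mderiv d p.2 (c2 Φ) ξ|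
          = |mderiv d p.1 (c1 Φ) ξ| * |mderiv d p.2 (c2 Φ) ξ| := abs_mul _ _
        _ ≤ (F1 p.1 (len1 p hp) X * Sgr Φ lo1 (hi1 + p.1.length) ξ)
            * (F2 p.2 (len2 p hp) X * Sgr Φ lo2 (hi2 + p.2.length) ξ) := by
            apply mul_le_mul
            · exact e1.trans (mul_le_mul_of_nonneg_right hm1' (Sgr_nonneg _ _ _ _))
            · exact e2.trans (mul_le_mul_of_nonneg_right hm2' (Sgr_nonneg _ _ _ _))
            · exact abs_nonneg _
            · exact mul_nonneg (hp1 _ _ _) (Sgr_nonneg _ _ _ _)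
        _ = (F1 p.1 (len1 p hp) X * F2 p.2 (len2 p hp) X)
            * (Sgr Φ lo1 (hi1 + p.1.length) ξ * Sgr Φ lo2 (hi2 + p.2.length) ξ) := by
            ring
        _ ≤ (F1 p.1 (len1 p hp) X * F2 p.2 (len2 p hp) X)
            * ((((hi1 + p.1.length) + 1) * (((hi2 + p.2.length)) + 1) : ℝ)
              * Sgr Φ (lo1+lo2) ((hi1 + p.1.length) + (hi2 + p.2.length)) ξ) := by
            apply mul_le_mul_of_nonneg_left _ (mul_nonneg (hp1 _ _ _) (hp2 _ _ _))
            have := Sgr_mul_le Φ lo1 (hi1 + p.1.length) lo2 (hi2 + p.2.length) ξ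
            exact_mod_cast this
        _ ≤ C * (F1 p.1 (len1 p hp) X * F2 p.2 (len2 p hp) X)
            * Sgr Φ (lo1+lo2) (hi1+hi2+β.length) ξ := by
            have hlen := leib_len (d := d) p hp
            have hexp : (hi1 + p.1.length) + (hi2 + p.2.length)
                = hi1 + hi2 + β.length := by omega
            rw [hexp]
            have hcard : (((hi1 + p.1.length) + 1) * (((hi2 + p.2.length)) + 1) : ℝ) ≤ C := by
              rw [hC]
              have b1 : (p.1.length : ℝ) ≤ (n : ℝ) := by exact_mod_cast len1 p hp
              have b2 : (p.2.length : ℝ) ≤ (n : ℝ) := by exact_mod_cast len2 p hp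
              have a1 : ((hi1 + p.1.length) + 1 : ℝ) ≤ (hi1 + n + 1 : ℝ) := by
                push_cast; linarith
              have a2 : ((hi2 + p.2.length) + 1 : ℝ) ≤ (hi2 + n + 1 : ℝ) := by
                push_cast; linarith
              apply mul_le_mul a1 a2 (by positivity) (by positivity)
            calc (F1 p.1 (len1 p hp) X * F2 p.2 (len2 p hp) X)
                * ((((hi1 + p.1.length) + 1) * (((hi2 + p.2.length)) + 1) : ℝ)
                  * Sgr Φ (lo1+lo2) (hi1 + hi2 + β.length) ξ)
                ≤ (F1 p.1 (len1 p hp) X * F2 p.2 (len2 p hp) X)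
                  * (C * Sgr Φ (lo1+lo2) (hi1 + hi2 + β.length) ξ) := by
                  apply mul_le_mul_of_nonneg_left _ (mul_nonneg (hp1 _ _ _) (hp2 _ _ _))
                  exact mul_le_mul_of_nonneg_right hcard (Sgr_nonneg _ _ _ _)
              _ = _ := by ring
    calc |((leib β).map (fun p => mderiv d p.1 (c1 Φ) ξ * mderiv d p.2 (c2 Φ) ξ)).sum|
        ≤ (((leib β).map (fun p => mderiv d p.1 (c1 Φ) ξ * mderiv d p.2 (c2 Φ) ξ)).map
            abs).sum := abs_listSum_le _
      _ = (((leib β).attach).map (fun q =>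
            |mderiv d q.1.1 (c1 Φ) ξ * mderiv d q.1.2 (c2 Φ) ξ|)).sum := by
          rw [List.map_map]
          conv_lhs => rw [← List.attach_map_subtype_val (leib β), List.map_map]
          rfl
      _ ≤ (((leib β).attach).map (fun q =>
            C * (F1 q.1.1 (len1 q.1 q.2) X * F2 q.1.2 (len2 q.1 q.2) X)
              * Sgr Φ (lo1+lo2) (hi1+hi2+β.length) ξ)).sum := by
          apply List.sum_le_sum
          intro q _
          exact key q
      _ = (((leib β).attach).map (fun q =>
            C * (F1 q.1.1 (len1 q.1 q.2) X * F2 q.1.2 (len2 q.1 q.2) X))).sum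
            * Sgr Φ (lo1+lo2) (hi1+hi2+β.length) ξ := by
          rw [← List.sum_map_mul_right]
      _ = _ := by rfl

lemma pderiv'_contDiff {f : Pt d → ℝ} (hf : ContDiff ℝ (⊤:ℕ∞) f) (i : Fin d) :
    ContDiff ℝ (⊤:ℕ∞) (pderiv' d i f) :=
  (hf.fderiv_right topc).clm_apply contDiff_const

lemma mderiv_contDiff {f : Pt d → ℝ} (hf : ContDiff ℝ (⊤:ℕ∞) f) (l : List (Fin d)) :
    ContDiff ℝ (⊤:ℕ∞) (mderiv d l f) := by
  induction l with
  | nil => exact hf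
  | cons a l ih => exact pderiv'_contDiff ih a

lemma good_mderivPhi (γ : List (Fin d)) (h2 : 2 ≤ γ.length) (n : ℕ) :
    GoodUpto n 0 0 γ.length (fun Φ => mderiv d γ Φ) := by
  constructor
  · intro Φ V hyp
    exact (mderiv_contDiff hyp.1 γ).contDiffOn
  · intro β _
    refine ⟨fun x => max x 0, fun x y hxy => max_le_max hxy le_rfl,
      fun x => le_max_right _ _, fun Φ V hyp ξ hξ => ?_⟩
    have e1 : mderiv d β (mderiv d γ Φ) ξ = mderiv d (β ++ γ) Φ ξ := by
      rw [mderiv_append]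
    have e2 : |mderiv d (β ++ γ) Φ ξ| ≤ ‖iteratedFDeriv ℝ (β ++ γ).length Φ ξ‖ :=
      abs_mderiv_le_norm_iteratedFDeriv hyp.1 _ ξ
    have e3 : ‖iteratedFDeriv ℝ (β ++ γ).length Φ ξ‖
        ≤ phaseSemi d (γ.length + β.length) V Φ := by
      apply norm_iteratedFDeriv_le_phaseSemi hyp.2.2 _ _ hξ.1
      · simp only [List.length_append]; omega
      · simp only [List.length_append]; omega
    have e4 : phaseSemi d (γ.length + β.length) V Φ
        ≤ max (phaseSemi d (γ.length + β.length) V Φ) 0 := le_max_left _ _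
    calc |mderiv d β (mderiv d γ Φ) ξ| ≤ max (phaseSemi d (γ.length + β.length) V Φ) 0 := by
          rw [e1]; exact e2.trans (e3.trans e4)
      _ ≤ max (phaseSemi d (γ.length + β.length) V Φ) 0 * Sgr Φ 0 (0 + β.length) ξ :=
          le_mul_of_one_le_right (le_max_right _ _) (Sgr_ge_one Φ ξ)

noncomputable def Ginv : (Pt d → ℝ) → Pt d → ℝ := fun Φ η => (‖gradient Φ η‖ ^ 2)⁻¹

noncomputable def Bf (i : Fin d) : (Pt d → ℝ) → Pt d → ℝ :=
  fun Φ η => fderiv ℝ Φ η (ee d i) / ‖gradient Φ η‖ ^ 2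

lemma Gne {Φ : Pt d → ℝ} {V : Set (Pt d)} {ξ : Pt d} (hξ : ξ ∈ uset Φ V) :
    ‖gradient Φ ξ‖ ^ 2 ≠ 0 :=
  pow_ne_zero 2 (norm_ne_zero_iff.2 hξ.2)

lemma Ginv_smooth {Φ : Pt d → ℝ} {V : Set (Pt d)} (hyp : Hyp Φ V) :
    ContDiffOn ℝ (⊤:ℕ∞) (Ginv Φ) (uset Φ V) :=
  ((normSq_gradient_contDiff hyp.1).contDiffOn).inv (fun ξ hξ => Gne hξ)

lemma B_smooth {Φ : Pt d → ℝ} {V : Set (Pt d)} (hyp : Hyp Φ V) (i : Fin d) :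
    ContDiffOn ℝ (⊤:ℕ∞) (Bf i Φ) (uset Φ V) :=
  (pderiv'_contDiff hyp.1 i).contDiffOn.div
    ((normSq_gradient_contDiff hyp.1).contDiffOn) (fun ξ hξ => Gne hξ)

lemma B_eq (Φ : Pt d → ℝ) (i : Fin d) :
    Bf i Φ = fun η => pderiv' d i Φ η * Ginv Φ η := by
  funext η
  rw [Bf, Ginv, div_eq_mul_inv]
  rfl

lemma normsq_eq_sum (x : Pt d) : ‖x‖ ^ 2 = ∑ j, (inner ℝ x (ee d j) : ℝ) ^ 2 := by
  have h1 : ∀ j : Fin d, (inner ℝ x (ee d j) : ℝ) = x j := by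
    intro j
    rw [ee, EuclideanSpace.inner_single_right]
    simp
  simp only [h1]
  rw [EuclideanSpace.norm_eq, Real.sq_sqrt (by positivity)]
  congr 1
  funext j
  rw [Real.norm_eq_abs, sq_abs]

lemma G_eq_sum (Φ : Pt d → ℝ) :
    (fun η => ‖gradient Φ η‖ ^ 2) = fun η => ∑ j, pderiv' d j Φ η * pderiv' d j Φ η := by
  funext η
  rw [normsq_eq_sum]
  congr 1
  funext j
  rw [← fderiv_apply_eq_inner, sq]
  rfl

lemma pderiv'_G {Φ : Pt d → ℝ} (hΦ : ContDiff ℝ (⊤:ℕ∞) Φ) (i : Fin d) (ξ : Pt d) :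
    pderiv' d i (fun η => ‖gradient Φ η‖ ^ 2) ξ
      = ∑ j, 2 * (pderiv' d j Φ ξ * mderiv d [i, j] Φ ξ) := by
  rw [G_eq_sum]
  have hdj : ∀ j : Fin d, DifferentiableAt ℝ (pderiv' d j Φ) ξ :=
    fun j => (pderiv'_contDiff hΦ j).differentiable (by simp) ξ
  rw [pderiv'_finsetSum Finset.univ (g := fun j η => pderiv' d j Φ η * pderiv' d j Φ η) (fun j _ => (hdj j).mul (hdj j)) i]
  congr 1
  funext j
  rw [pderiv'_mul (hdj j) (hdj j) i]
  have : pderiv' d i (pderiv' d j Φ) ξ = mderiv d [i, j] Φ ξ := rfl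
  rw [this]
  ring

lemma pderiv'_Ginv {Φ : Pt d → ℝ} {V : Set (Pt d)} (hyp : Hyp Φ V) (i : Fin d)
    {ξ : Pt d} (hξ : ξ ∈ uset Φ V) :
    pderiv' d i (Ginv Φ) ξ
      = -((‖gradient Φ ξ‖ ^ 2) ^ 2)⁻¹ * pderiv' d i (fun η => ‖gradient Φ η‖ ^ 2) ξ := by
  have hG : DifferentiableAt ℝ (fun η => ‖gradient Φ η‖ ^ 2) ξ :=
    (normSq_gradient_contDiff hyp.1).differentiable (by simp) ξ
  have hinv := (hasDerivAt_inv (Gne hξ)).comp_hasFDerivAt ξ hG.hasFDerivAt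
  have hcomp : (fun η => (‖gradient Φ η‖ ^ 2)⁻¹)
      = (fun y => y⁻¹) ∘ (fun η => ‖gradient Φ η‖ ^ 2) := rfl
  have : pderiv' d i (Ginv Φ) ξ
      = (fderiv ℝ (fun η => (‖gradient Φ η‖ ^ 2)⁻¹) ξ) (ee d i) := rfl
  rw [this, hcomp, hinv.fderiv]
  simp [pderiv', ee]

lemma Ginv_deriv_formula {Φ : Pt d → ℝ} {V : Set (Pt d)} (hyp : Hyp Φ V) (i : Fin d)
    {ξ : Pt d} (hξ : ξ ∈ uset Φ V) :
    pderiv' d i (Ginv Φ) ξ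
      = ∑ j, (-2) * (Bf j Φ ξ * (Ginv Φ ξ * mderiv d [i, j] Φ ξ)) := by
  rw [pderiv'_Ginv hyp i hξ, pderiv'_G hyp.1 i ξ, Finset.mul_sum]
  congr 1
  funext j
  rw [Bf, Ginv, div_eq_mul_inv, ← inv_pow]
  simp only [pderiv', ee]
  ring

lemma B_deriv_formula {Φ : Pt d → ℝ} {V : Set (Pt d)} (hyp : Hyp Φ V) (i j : Fin d)
    {ξ : Pt d} (hξ : ξ ∈ uset Φ V) :
    pderiv' d i (Bf j Φ) ξ
      = mderiv d [i, j] Φ ξ * Ginv Φ ξ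
        + ∑ k, (-2) * (Bf j Φ ξ * (Bf k Φ ξ * mderiv d [i, k] Φ ξ)) := by
  have hdp : DifferentiableAt ℝ (pderiv' d j Φ) ξ :=
    (pderiv'_contDiff hyp.1 j).differentiable (by simp) ξ
  have hdG : DifferentiableAt ℝ (Ginv Φ) ξ := diffAt (uset_open hyp) (Ginv_smooth hyp) hξ
  rw [B_eq]
  rw [pderiv'_mul hdp hdG i]
  rw [Ginv_deriv_formula hyp i hξ, Finset.mul_sum]
  refine congrArg₂ (· + ·) rfl ?_
  apply Finset.sum_congr rfl
  intro k _
  have hb : (fun η => pderiv' d j Φ η * Ginv Φ η) ξ = pderiv' d j Φ ξ * Ginv Φ ξ := rfl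
  rw [hb]
  ring

lemma abs_B_le {Φ : Pt d → ℝ} {V : Set (Pt d)} {ξ : Pt d} (hξ : ξ ∈ uset Φ V) (j : Fin d) :
    |Bf j Φ ξ| ≤ ‖gradient Φ ξ‖⁻¹ := by
  have hpos := norm_grad_pos hξ
  rw [Bf, abs_div, abs_of_nonneg (by positivity : (0:ℝ) ≤ ‖gradient Φ ξ‖ ^ 2)]
  have h1 : |fderiv ℝ Φ ξ (ee d j)| ≤ ‖gradient Φ ξ‖ := abs_pderiv'_le_norm_gradient Φ ξ j
  calc |fderiv ℝ Φ ξ (ee d j)| / ‖gradient Φ ξ‖ ^ 2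
      ≤ ‖gradient Φ ξ‖ / ‖gradient Φ ξ‖ ^ 2 :=
        (div_le_div_iff_of_pos_right (by positivity)).2 h1
    _ = ‖gradient Φ ξ‖⁻¹ := by
        rw [sq, div_mul_cancel_left₀ (ne_of_gt hpos)]

lemma goodUpto_GinvB : ∀ n : ℕ,
    GoodUpto (d := d) n 2 2 1 Ginv ∧ ∀ j : Fin d, GoodUpto n 1 1 1 (Bf j) := by
  intro n
  induction n with
  | zero =>
    constructor
    · refine ⟨fun Φ V hyp => Ginv_smooth hyp, fun β hβ => ?_⟩
      have hβ0 : β = [] := List.length_eq_zero_iff.1 (Nat.le_zero.1 hβ)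
      subst hβ0
      refine ⟨fun _ => 1, monotone_const, fun _ => zero_le_one, fun Φ V hyp ξ hξ => ?_⟩
      have hS : Sgr Φ 2 (2 + ([] : List (Fin d)).length) ξ = (‖gradient Φ ξ‖ ^ 2)⁻¹ := by
        simp [Sgr]
      rw [hS, one_mul]
      show |Ginv Φ ξ| ≤ _
      rw [Ginv, abs_of_nonneg (by positivity)]
    · intro j
      refine ⟨fun Φ V hyp => B_smooth hyp j, fun β hβ => ?_⟩
      have hβ0 : β = [] := List.length_eq_zero_iff.1 (Nat.le_zero.1 hβ)
      subst hβ0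
      refine ⟨fun _ => 1, monotone_const, fun _ => zero_le_one, fun Φ V hyp ξ hξ => ?_⟩
      have hS : Sgr Φ 1 (1 + ([] : List (Fin d)).length) ξ = ‖gradient Φ ξ‖⁻¹ := by
        simp [Sgr]
      rw [hS, one_mul]
      exact abs_B_le hξ j
  | succ n ihn =>
    have hphi2 : ∀ i j : Fin d, GoodUpto (d := d) n 0 0 2 (fun Φ => mderiv d [i, j] Φ) :=
      fun i j => good_mderivPhi [i, j] (by simp) n
    constructor
    · refine ⟨fun Φ V hyp => Ginv_smooth hyp, fun β hβ => ?_⟩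
      by_cases hble : β.length ≤ n
      · obtain ⟨F, hm, hp, hb⟩ := ihn.1.2 β hble
        exact ⟨F, hm, hp, hb⟩
      · have hlen : β.length = n + 1 := by omega
        have hne : β ≠ [] := by
          intro h; rw [h] at hlen; simp at hlen
        set i := β.getLast hne with hi
        set β' := β.dropLast with hβ'
        have hsplit : β' ++ [i] = β := List.dropLast_append_getLast hne
        have hβ'len : β'.length = n := by
          rw [hβ', List.length_dropLast]; omega
        have hR : GoodUpto (d := d) n 3 3 2
            (fun Φ η => ∑ j, (-2) * (Bf j Φ η * (Ginv Φ η * mderiv d [i, j] Φ η))) := by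
          apply good_sum
          intro j _
          have inner : GoodUpto (d := d) n (2+0) (2+0) (max 1 2)
              (fun Φ η => Ginv Φ η * mderiv d [i, j] Φ η) := good_mul ihn.1 (hphi2 i j)
          have outer : GoodUpto (d := d) n (1+(2+0)) (1+(2+0)) (max 1 (max 1 2))
              (fun Φ η => Bf j Φ η * (Ginv Φ η * mderiv d [i, j] Φ η)) :=
            good_mul (ihn.2 j) inner
          exact good_const_mul (-2) (good_weaken le_rfl le_rfl (by omega) outer)
        obtain ⟨F, hm, hp, hb⟩ := hR.2 β' (by omega)
        refine ⟨F, hm, hp, fun Φ V hyp ξ hξ => ?_⟩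
        have e1 : mderiv d β (Ginv Φ) ξ
            = mderiv d β' (pderiv' d i (Ginv Φ)) ξ := by
          conv_lhs => rw [← hsplit]
          rw [mderiv_append]
          rfl
        have e2 : mderiv d β' (pderiv' d i (Ginv Φ)) ξ
            = mderiv d β' (fun η => ∑ j, (-2) * (Bf j Φ η * (Ginv Φ η * mderiv d [i, j] Φ η))) ξ := by
          apply mderiv_congr_on (uset_open hyp) _ β' hξ
          intro η hη
          exact Ginv_deriv_formula hyp i hη
        rw [e1, e2]
        have e3 := hb Φ V hyp ξ hξ
        have hps : (2 + β'.length) = (1 + β.length) := by omega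
        rw [hps] at e3
        refine e3.trans ?_
        apply mul_le_mul_of_nonneg_left _ (hp _)
        exact Sgr_mono (by omega) (by omega) Φ ξ
    · intro j
      refine ⟨fun Φ V hyp => B_smooth hyp j, fun β hβ => ?_⟩
      by_cases hble : β.length ≤ n
      · obtain ⟨F, hm, hp, hb⟩ := (ihn.2 j).2 β hble
        exact ⟨F, hm, hp, hb⟩
      · have hlen : β.length = n + 1 := by omega
        have hne : β ≠ [] := by
          intro h; rw [h] at hlen; simp at hlen
        set i := β.getLast hne with hi
        set β' := β.dropLast with hβ'
        have hsplit : β' ++ [i] = β := List.dropLast_append_getLast hne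
        have hβ'len : β'.length = n := by
          rw [hβ', List.length_dropLast]; omega
        have hR : GoodUpto (d := d) n 2 2 2
            (fun Φ η => mderiv d [i, j] Φ η * Ginv Φ η
              + ∑ k, (-2) * (Bf j Φ η * (Bf k Φ η * mderiv d [i, k] Φ η))) := by
          apply good_add
          · have h1 : GoodUpto (d := d) n (0+2) (0+2) (max 2 1)
                (fun Φ η => mderiv d [i, j] Φ η * Ginv Φ η) := good_mul (hphi2 i j) ihn.1
            exact good_weaken le_rfl le_rfl (by omega) h1
          · apply good_sum
            intro k _
            have inner : GoodUpto (d := d) n (1+0) (1+0) (max 1 2)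
                (fun Φ η => Bf k Φ η * mderiv d [i, k] Φ η) := good_mul (ihn.2 k) (hphi2 i k)
            have outer : GoodUpto (d := d) n (1+(1+0)) (1+(1+0)) (max 1 (max 1 2))
                (fun Φ η => Bf j Φ η * (Bf k Φ η * mderiv d [i, k] Φ η)) :=
              good_mul (ihn.2 j) inner
            exact good_const_mul (-2) (good_weaken le_rfl le_rfl (by omega) outer)
        obtain ⟨F, hm, hp, hb⟩ := hR.2 β' (by omega)
        refine ⟨F, hm, hp, fun Φ V hyp ξ hξ => ?_⟩
        have e1 : mderiv d β (Bf j Φ) ξ = mderiv d β' (pderiv' d i (Bf j Φ)) ξ := by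
          conv_lhs => rw [← hsplit]
          rw [mderiv_append]
          rfl
        have e2 : mderiv d β' (pderiv' d i (Bf j Φ)) ξ
            = mderiv d β' (fun η => mderiv d [i, j] Φ η * Ginv Φ η
              + ∑ k, (-2) * (Bf j Φ η * (Bf k Φ η * mderiv d [i, k] Φ η))) ξ := by
          apply mderiv_congr_on (uset_open hyp) _ β' hξ
          intro η hη
          exact B_deriv_formula hyp i j hη
        rw [e1, e2]
        have e3 := hb Φ V hyp ξ hξ
        have hps : (2 + β'.length) = (1 + β.length) := by omega
        rw [hps] at e3
        refine e3.trans ?_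
        apply mul_le_mul_of_nonneg_left _ (hp _)
        exact Sgr_mono (by omega) (by omega) Φ ξ

lemma mderiv_const (c : ℝ) (l : List (Fin d)) :
    mderiv d l (fun _ => c) = fun _ => if l = [] then c else 0 := by
  induction l with
  | nil => simp [mderiv]
  | cons a l ih =>
    funext ξ
    show pderiv' d a (mderiv d l fun _ => c) ξ = _
    rw [ih]
    by_cases hl : l = []
    · subst hl
      simp [pderiv']
    · simp only [if_neg hl]
      simp [pderiv']

lemma good_const (r : ℝ) (n ord : ℕ) :
    GoodUpto (d := d) n 0 0 ord (fun _ _ => r) := by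
  refine ⟨fun Φ V _ => contDiffOn_const, fun β _ => ⟨fun _ => |r|, monotone_const,
    fun _ => abs_nonneg r, fun Φ V hyp ξ hξ => ?_⟩⟩
  rw [mderiv_const]
  by_cases hβ : β = []
  · simp only [if_pos hβ]
    exact le_mul_of_one_le_right (abs_nonneg r) (Sgr_ge_one Φ ξ)
  · simp only [if_neg hβ]
    simp only [abs_zero]
    exact mul_nonneg (abs_nonneg r) (Sgr_nonneg _ _ _ _)

def GoodF (lo hi ord : ℕ) (c : (Pt d → ℝ) → Pt d → ℝ) : Prop :=
  ∀ n, GoodUpto n lo hi ord c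

lemma goodF_pderiv {lo hi ord : ℕ} {c : (Pt d → ℝ) → Pt d → ℝ} (hc : GoodF lo hi ord c)
    (i : Fin d) : GoodF lo (hi+1) (ord+1) (fun Φ => pderiv' d i (c Φ)) := by
  intro n
  refine ⟨fun Φ V hyp => pderiv'_contDiffOn (uset_open hyp) ((hc 0).1 Φ V hyp) i,
    fun β hβ => ?_⟩
  obtain ⟨F, hm, hp, hb⟩ := (hc (n+1)).2 (β ++ [i]) (by simp; omega)
  refine ⟨F, hm, hp, fun Φ V hyp ξ hξ => ?_⟩
  have e1 : mderiv d β (pderiv' d i (c Φ)) ξ = mderiv d (β ++ [i]) (c Φ) ξ := by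
    rw [mderiv_append]
    rfl
  rw [e1]
  have := hb Φ V hyp ξ hξ
  have hlen : (β ++ [i]).length = β.length + 1 := by simp
  rw [hlen] at this
  have h1 : ord + (β.length + 1) = ord + 1 + β.length := by omega
  have h2 : hi + (β.length + 1) = hi + 1 + β.length := by omega
  rw [h1, h2] at this
  exact this

lemma goodF_ite {lo hi ord : ℕ} {P : Prop} [Decidable P] {c : (Pt d → ℝ) → Pt d → ℝ}
    (hc : P → GoodF lo hi ord c) :
    GoodF (d := d) lo hi ord (fun Φ ξ => if P then c Φ ξ else 0) := by
  by_cases hP : P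
  · simp only [if_pos hP]
    exact hc hP
  · simp only [if_neg hP]
    intro n
    exact good_zero

def sIdx {N : ℕ} (α : Fin d → Fin (N+1)) : ℕ := ∑ i, (α i : ℕ)

def decIdx {N : ℕ} (α : Fin d → Fin (N+1)) (i : Fin d) : Fin d → Fin (N+1) :=
  Function.update α i ⟨(α i : ℕ) - 1, Nat.lt_of_le_of_lt (Nat.sub_le _ _) (α i).isLt⟩

def incIdx {N : ℕ} (α : Fin d → Fin (N+1)) (i : Fin d) : Fin d → Fin (N+1) :=
  Function.update α i ⟨min ((α i : ℕ) + 1) N, by omega⟩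

lemma decIdx_apply {N : ℕ} (α : Fin d → Fin (N+1)) (i j : Fin d) :
    ((decIdx α i) j : ℕ) = if j = i then (α i : ℕ) - 1 else (α j : ℕ) := by
  rw [decIdx, Function.update_apply]
  split_ifs <;> rfl

lemma incIdx_apply {N : ℕ} (α : Fin d → Fin (N+1)) (i j : Fin d) :
    ((incIdx α i) j : ℕ) = if j = i then min ((α i : ℕ) + 1) N else (α j : ℕ) := by
  rw [incIdx, Function.update_apply]
  split_ifs <;> rfl

lemma le_sIdx {N : ℕ} (α : Fin d → Fin (N+1)) (i : Fin d) : (α i : ℕ) ≤ sIdx α :=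
  Finset.single_le_sum (f := fun j => (α j : ℕ)) (fun j _ => Nat.zero_le _)
    (Finset.mem_univ i)

lemma sIdx_le {N : ℕ} {α β : Fin d → Fin (N+1)}
    (h : ∀ j, (α j : ℕ) ≤ (β j : ℕ)) : sIdx α ≤ sIdx β :=
  Finset.sum_le_sum (fun j _ => h j)

lemma sIdx_decIdx {N : ℕ} {α : Fin d → Fin (N+1)} {i : Fin d} (h : 1 ≤ (α i : ℕ)) :
    sIdx (decIdx α i) = sIdx α - 1 := by
  have h1 : ∀ γ : Fin d → Fin (N+1), sIdx γ
      = (γ i : ℕ) + ∑ j ∈ Finset.univ \ {i}, (γ j : ℕ) := fun γ => by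
    rw [sIdx, Finset.sum_eq_sum_sdiff_singleton_add (Finset.mem_univ i)]
    omega
  rw [h1, h1]
  have h2 : ∑ j ∈ Finset.univ \ {i}, ((decIdx α i) j : ℕ)
      = ∑ j ∈ Finset.univ \ {i}, (α j : ℕ) := by
    apply Finset.sum_congr rfl
    intro j hj
    rw [decIdx_apply, if_neg (by simp at hj; exact hj)]
  rw [h2, decIdx_apply, if_pos rfl]
  omega

lemma sIdx_incIdx {N : ℕ} {α : Fin d → Fin (N+1)} {i : Fin d} (h : (α i : ℕ) < N) :
    sIdx (incIdx α i) = sIdx α + 1 := by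
  have h1 : ∀ γ : Fin d → Fin (N+1), sIdx γ
      = (γ i : ℕ) + ∑ j ∈ Finset.univ \ {i}, (γ j : ℕ) := fun γ => by
    rw [sIdx, Finset.sum_eq_sum_sdiff_singleton_add (Finset.mem_univ i)]
    omega
  rw [h1, h1]
  have h2 : ∑ j ∈ Finset.univ \ {i}, ((incIdx α i) j : ℕ)
      = ∑ j ∈ Finset.univ \ {i}, (α j : ℕ) := by
    apply Finset.sum_congr rfl
    intro j hj
    rw [incIdx_apply, if_neg (by simp at hj; exact hj)]
  rw [h2, incIdx_apply, if_pos rfl]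
  omega

lemma decIdx_incIdx {N : ℕ} {α : Fin d → Fin (N+1)} {i : Fin d} (h : (α i : ℕ) < N) :
    decIdx (incIdx α i) i = α := by
  funext j
  apply Fin.ext
  rw [decIdx_apply]
  by_cases hji : j = i
  · subst hji
    rw [if_pos rfl, incIdx_apply, if_pos rfl]
    omega
  · rw [if_neg hji, incIdx_apply, if_neg hji]

lemma incIdx_decIdx {N : ℕ} {α : Fin d → Fin (N+1)} {i : Fin d} (h : 1 ≤ (α i : ℕ)) :
    incIdx (decIdx α i) i = α := by
  funext j
  apply Fin.ext
  rw [incIdx_apply]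
  by_cases hji : j = i
  · subst hji
    rw [if_pos rfl, decIdx_apply, if_pos rfl]
    have := (α j).isLt
    omega
  · rw [if_neg hji, decIdx_apply, if_neg hji]

lemma count_flatMap_replicate {N : ℕ} (α : Fin d → Fin (N+1)) (j : Fin d) :
    ∀ l : List (Fin d), (l.flatMap fun i => List.replicate (α i : ℕ) i).count j
      = (l.map fun i => if j = i then (α i : ℕ) else 0).sum := by
  intro l
  induction l with
  | nil => simp
  | cons a l ih =>
    rw [List.flatMap_cons, List.count_append, ih, List.map_cons, List.sum_cons,
      List.count_replicate]
    congr 1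
    by_cases h : j = a
    · subst h; simp
    · simp [h, Ne.symm h]

lemma count_mIdxList {N : ℕ} (α : Fin d → Fin (N+1)) (j : Fin d) :
    (mIdxList d N α).count j = (α j : ℕ) := by
  rw [mIdxList, count_flatMap_replicate]
  have h1 : ((List.finRange d).map fun i => if j = i then (α i : ℕ) else 0).sum
      = ∑ i ∈ (List.finRange d).toFinset, (if j = i then (α i : ℕ) else 0) := by
    rw [List.sum_toFinset _ (List.nodup_finRange d)]
  rw [h1, List.toFinset_finRange, Finset.sum_ite_eq]
  simp

lemma perm_cons_mIdxList {N : ℕ} {α : Fin d → Fin (N+1)} {i : Fin d}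
    (h : (α i : ℕ) < N) :
    (i :: mIdxList d N α).Perm (mIdxList d N (incIdx α i)) := by
  rw [List.perm_iff_count]
  intro j
  by_cases hji : j = i
  · subst hji
    simp only [List.count_cons, count_mIdxList, incIdx_apply, if_pos rfl,
      beq_self_eq_true, if_true]
    omega
  · simp only [List.count_cons, count_mIdxList, incIdx_apply, if_neg hji]
    simp [Ne.symm hji]

noncomputable def coefC (N : ℕ) (Φ : Pt d → ℝ) : ℕ → (Fin d → Fin (N+1)) → Pt d → ℝ
  | 0, α => fun _ => if α = 0 then 1 else 0
  | n+1, α => fun ξ =>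
      (∑ i, pderiv' d i (fun η => Bf i Φ η * coefC N Φ n α η) ξ)
      + ∑ i, (if 1 ≤ (α i : ℕ) then Bf i Φ ξ * coefC N Φ n (decIdx α i) ξ else 0)

lemma sIdx_zero {N : ℕ} : sIdx (d := d) (0 : Fin d → Fin (N+1)) = 0 := by
  simp [sIdx]

lemma coefC_zero (N : ℕ) (Φ : Pt d → ℝ) :
    ∀ n, ∀ α : Fin d → Fin (N+1), n < sIdx α → coefC N Φ n α = fun _ => 0 := by
  intro n
  induction n with
  | zero =>
    intro α hα
    have hne : α ≠ 0 := by
      intro h0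
      rw [h0, sIdx_zero] at hα
      omega
    show (fun _ => if α = 0 then (1:ℝ) else 0) = fun _ => 0
    simp [if_neg hne]
  | succ n ih =>
    intro α hα
    funext ξ
    show (∑ i, pderiv' d i (fun η => Bf i Φ η * coefC N Φ n α η) ξ)
      + (∑ i, (if 1 ≤ (α i : ℕ) then Bf i Φ ξ * coefC N Φ n (decIdx α i) ξ else 0)) = 0
    have h1 : ∀ i : Fin d, pderiv' d i (fun η => Bf i Φ η * coefC N Φ n α η) ξ = 0 := by
      intro i
      have hz : (fun η => Bf i Φ η * coefC N Φ n α η) = fun _ => 0 := by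
        rw [ih α (by omega)]
        funext η
        simp
      rw [hz, pderiv'_zero]
    have h2 : ∀ i : Fin d,
        (if 1 ≤ (α i : ℕ) then Bf i Φ ξ * coefC N Φ n (decIdx α i) ξ else 0) = 0 := by
      intro i
      by_cases h : 1 ≤ (α i : ℕ)
      · rw [if_pos h, ih (decIdx α i) (by rw [sIdx_decIdx h]; omega)]
        simp
      · rw [if_neg h]
    simp [h1, h2]

lemma coefC_smooth {Φ : Pt d → ℝ} {V : Set (Pt d)} (hyp : Hyp Φ V) (N : ℕ) :
    ∀ n, ∀ α : Fin d → Fin (N+1), ContDiffOn ℝ (⊤:ℕ∞) (coefC N Φ n α) (uset Φ V) := by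
  intro n
  induction n with
  | zero => intro α; exact contDiffOn_const
  | succ n ih =>
    intro α
    show ContDiffOn ℝ (⊤:ℕ∞) (fun ξ =>
      (∑ i, pderiv' d i (fun η => Bf i Φ η * coefC N Φ n α η) ξ)
      + ∑ i, (if 1 ≤ (α i : ℕ) then Bf i Φ ξ * coefC N Φ n (decIdx α i) ξ else 0)) _
    apply ContDiffOn.add
    · apply ContDiffOn.sum
      intro i _
      exact pderiv'_contDiffOn (uset_open hyp) ((B_smooth hyp i).mul (ih α)) i
    · apply ContDiffOn.sum
      intro i _
      by_cases h : 1 ≤ (α i : ℕ)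
      · simp only [if_pos h]
        exact (B_smooth hyp i).mul (ih (decIdx α i))
      · simp only [if_neg h]
        exact contDiffOn_const

lemma coefC_good (N : ℕ) :
    ∀ n, ∀ α : Fin d → Fin (N+1), sIdx α ≤ n →
      GoodF n (2*n - sIdx α) (n - sIdx α + 1) (fun Φ => coefC N Φ n α) := by
  intro n
  induction n with
  | zero =>
    intro α hα
    intro m
    have h0 : sIdx α = 0 := Nat.le_zero.1 hα
    have := good_const (d := d) (if α = 0 then (1:ℝ) else 0) m 1
    simpa [h0, coefC] using this
  | succ n ih =>
    intro α hα
    set s := sIdx α with hs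
    intro m
    show GoodUpto m (n+1) (2*(n+1) - s) ((n+1) - s + 1) (fun Φ ξ =>
      (∑ i, pderiv' d i (fun η => Bf i Φ η * coefC N Φ n α η) ξ)
      + ∑ i, (if 1 ≤ (α i : ℕ) then Bf i Φ ξ * coefC N Φ n (decIdx α i) ξ else 0))
    apply good_add
    · -- first group
      by_cases hsn : s ≤ n
      · apply good_sum
        intro i _
        have hmul : GoodF (1+n) (1+(2*n - s)) (max 1 (n - s + 1))
            (fun Φ ξ => Bf i Φ ξ * coefC N Φ n α ξ) :=
          fun m' => good_mul ((goodUpto_GinvB m').2 i) (ih α hsn m')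
        have hder : GoodF (1+n) ((1+(2*n - s))+1) ((max 1 (n - s + 1))+1)
            (fun Φ => pderiv' d i (fun η => Bf i Φ η * coefC N Φ n α η)) :=
          goodF_pderiv hmul i
        exact good_weaken (by omega) (by omega)
          (by
            have h1 : max 1 (n - s + 1) = n - s + 1 := by omega
            rw [h1]; omega) (hder m)
      · have hzero : (fun Φ ξ =>
            ∑ i, pderiv' d i (fun η => Bf i Φ η * coefC N Φ n α η) ξ)
            = fun (_ : Pt d → ℝ) (_ : Pt d) => (0:ℝ) := by
          funext Φ ξ
          have h1 : ∀ i : Fin d,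
              pderiv' d i (fun η => Bf i Φ η * coefC N Φ n α η) ξ = 0 := by
            intro i
            have hz : (fun η => Bf i Φ η * coefC N Φ n α η) = fun _ => 0 := by
              rw [coefC_zero N Φ n α (by omega)]
              funext η
              simp
            rw [hz, pderiv'_zero]
          simp [h1]
        rw [hzero]
        exact good_zero
    · apply good_sum
      intro i _
      have : GoodF (n+1) (2*(n+1) - s) ((n+1) - s + 1)
          (fun Φ ξ => if 1 ≤ (α i : ℕ) then Bf i Φ ξ * coefC N Φ n (decIdx α i) ξ else 0) := by
        apply goodF_ite
        intro h
        have hdec : sIdx (decIdx α i) = s - 1 := sIdx_decIdx h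
        have hle : sIdx (decIdx α i) ≤ n := by omega
        have hmul : GoodF (1+n) (1+(2*n - sIdx (decIdx α i)))
            (max 1 (n - sIdx (decIdx α i) + 1))
            (fun Φ ξ => Bf i Φ ξ * coefC N Φ n (decIdx α i) ξ) :=
          fun m' => good_mul ((goodUpto_GinvB m').2 i) (ih (decIdx α i) hle m')
        intro m'
        apply good_weaken (by omega) (by rw [hdec]; omega)
          (by rw [hdec]; exact max_le (by omega) (by omega)) (hmul m')
      exact this m

lemma mIdxList_zero (N : ℕ) : mIdxList d N (0 : Fin d → Fin (N+1)) = [] := by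
  have h : ∀ j : Fin d, (mIdxList d N (0 : Fin d → Fin (N+1))).count j = 0 := by
    intro j
    rw [count_mIdxList]
    rfl
  rcases hl : mIdxList d N (0 : Fin d → Fin (N+1)) with _ | ⟨a, l⟩
  · rfl
  · exfalso
    have := h a
    rw [hl] at this
    simp [List.count_cons] at this

lemma transpOp_eq (Φ g : Pt d → ℝ) (ξ : Pt d) :
    transpOp d Φ g ξ = ∑ i, pderiv' d i (fun η => Bf i Φ η * g η) ξ := rfl

lemma expansion {Φ : Pt d → ℝ} {V : Set (Pt d)} (hyp : Hyp Φ V) (N : ℕ) :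
    ∀ n, n ≤ N → ∀ f : Pt d → ℝ, ContDiffOn ℝ (⊤:ℕ∞) f (uset Φ V) →
      ∀ ξ ∈ uset Φ V, (transpOp d Φ)^[n] f ξ
        = ∑ α : Fin d → Fin (N+1), coefC N Φ n α ξ * mderiv d (mIdxList d N α) f ξ := by
  intro n
  induction n with
  | zero =>
    intro _ f _ ξ _
    simp only [Function.iterate_zero, id_eq]
    rw [Finset.sum_eq_single (0 : Fin d → Fin (N+1))]
    · show _ = (if (0 : Fin d → Fin (N+1)) = 0 then (1:ℝ) else 0) * _
      rw [if_pos rfl, one_mul, mIdxList_zero]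
      rfl
    · intro α _ hα
      show (if α = 0 then (1:ℝ) else 0) * _ = 0
      rw [if_neg hα, zero_mul]
    · intro h
      exact absurd (Finset.mem_univ _) h
  | succ n ih =>
    intro hn f hf ξ hξ
    have hn' : n ≤ N := by omega
    have ihf := ih hn' f hf
    have hU : IsOpen (uset Φ V) := uset_open hyp
    set S : Pt d → ℝ :=
      fun η => ∑ α : Fin d → Fin (N+1), coefC N Φ n α η * mderiv d (mIdxList d N α) f η
      with hS
    -- differentiability facts
    have hCd : ∀ α : Fin d → Fin (N+1), ∀ η ∈ uset Φ V,
        DifferentiableAt ℝ (coefC N Φ n α) η :=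
      fun α η hη => diffAt hU (coefC_smooth hyp N n α) hη
    have hMd : ∀ α : Fin d → Fin (N+1), ∀ η ∈ uset Φ V,
        DifferentiableAt ℝ (mderiv d (mIdxList d N α) f) η :=
      fun α η hη => diffAt hU (mderiv_contDiffOn hU hf _) hη
    have hBd : ∀ i : Fin d, ∀ η ∈ uset Φ V, DifferentiableAt ℝ (Bf i Φ) η :=
      fun i η hη => diffAt hU (B_smooth hyp i) hη
    -- step 1: replace iterate by S inside each pderiv'
    rw [Function.iterate_succ_apply', transpOp_eq]
    have step1 : ∀ i : Fin d,
        pderiv' d i (fun η => Bf i Φ η * (transpOp d Φ)^[n] f η) ξ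
          = ∑ α : Fin d → Fin (N+1), (pderiv' d i
              (fun η => Bf i Φ η * coefC N Φ n α η) ξ * mderiv d (mIdxList d N α) f ξ
            + (Bf i Φ ξ * coefC N Φ n α ξ) * mderiv d (i :: mIdxList d N α) f ξ) := by
      intro i
      have e1 : (fun η => Bf i Φ η * (transpOp d Φ)^[n] f η) =ᶠ[nhds ξ]
          (fun η => ∑ α : Fin d → Fin (N+1),
            (Bf i Φ η * coefC N Φ n α η) * mderiv d (mIdxList d N α) f η) := by
        apply Filter.eventuallyEq_of_mem (hU.mem_nhds hξ)
        intro η hη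
        show Bf i Φ η * (transpOp d Φ)^[n] f η = _
        rw [ihf η hη, Finset.mul_sum]
        exact Finset.sum_congr rfl fun α _ => by ring
      have e2 : pderiv' d i (fun η => Bf i Φ η * (transpOp d Φ)^[n] f η) ξ
          = pderiv' d i (fun η => ∑ α : Fin d → Fin (N+1),
            (Bf i Φ η * coefC N Φ n α η) * mderiv d (mIdxList d N α) f η) ξ :=
        (pderiv'_congr_nhds e1 i).eq_of_nhds
      rw [e2, pderiv'_finsetSum Finset.univ (g := fun α η =>
          (Bf i Φ η * coefC N Φ n α η) * mderiv d (mIdxList d N α) f η) (fun α _ =>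
        (((hBd i ξ hξ).mul (hCd α ξ hξ)).mul (hMd α ξ hξ))) i]
      apply Finset.sum_congr rfl
      intro α _
      rw [pderiv'_mul (f := fun η => Bf i Φ η * coefC N Φ n α η) ((hBd i ξ hξ).mul (hCd α ξ hξ)) (hMd α ξ hξ) i]
      rfl
    -- claim 2 : reindexing of the second parts
    have claim2 : ∀ i : Fin d,
        (∑ α : Fin d → Fin (N+1),
          (Bf i Φ ξ * coefC N Φ n α ξ) * mderiv d (i :: mIdxList d N α) f ξ)
        = ∑ α : Fin d → Fin (N+1),
          (if 1 ≤ (α i : ℕ) then Bf i Φ ξ * coefC N Φ n (decIdx α i) ξ else 0)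
            * mderiv d (mIdxList d N α) f ξ := by
      intro i
      have hL : (∑ α : Fin d → Fin (N+1),
            (Bf i Φ ξ * coefC N Φ n α ξ) * mderiv d (i :: mIdxList d N α) f ξ)
          = ∑ α ∈ Finset.univ.filter (fun α : Fin d → Fin (N+1) => sIdx α ≤ n),
            (Bf i Φ ξ * coefC N Φ n α ξ) * mderiv d (i :: mIdxList d N α) f ξ := by
        symm
        apply Finset.sum_subset (Finset.filter_subset _ _)
        intro α _ hα
        rw [Finset.mem_filter] at hα
        push_neg at hα
        have hs : n < sIdx α := hα (Finset.mem_univ α)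
        rw [coefC_zero N Φ n α hs]
        simp
      have hR : (∑ α : Fin d → Fin (N+1),
            (if 1 ≤ (α i : ℕ) then Bf i Φ ξ * coefC N Φ n (decIdx α i) ξ else 0)
              * mderiv d (mIdxList d N α) f ξ)
          = ∑ α ∈ Finset.univ.filter
              (fun α : Fin d → Fin (N+1) => 1 ≤ (α i : ℕ) ∧ sIdx α ≤ n + 1),
            (if 1 ≤ (α i : ℕ) then Bf i Φ ξ * coefC N Φ n (decIdx α i) ξ else 0)
              * mderiv d (mIdxList d N α) f ξ := by
        symm
        apply Finset.sum_subset (Finset.filter_subset _ _)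
        intro α _ hα
        rw [Finset.mem_filter] at hα
        push_neg at hα
        have hcond := hα (Finset.mem_univ α)
        by_cases h1 : 1 ≤ (α i : ℕ)
        · have hs : n + 1 < sIdx α := hcond h1
          rw [if_pos h1, coefC_zero N Φ n (decIdx α i) (by rw [sIdx_decIdx h1]; omega)]
          simp
        · rw [if_neg h1, zero_mul]
      rw [hL, hR]
      apply Finset.sum_bij' (i := fun α _ => incIdx α i) (j := fun α' _ => decIdx α' i)
      · intro α hα
        rw [Finset.mem_filter] at hα ⊢
        have hαi : (α i : ℕ) < N := by
          have := le_sIdx α i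
          omega
        refine ⟨Finset.mem_univ _, ?_, ?_⟩
        · rw [incIdx_apply, if_pos rfl]
          omega
        · rw [sIdx_incIdx hαi]
          omega
      · intro α' hα'
        rw [Finset.mem_filter] at hα' ⊢
        refine ⟨Finset.mem_univ _, ?_⟩
        rw [sIdx_decIdx hα'.2.1]
        omega
      · intro α hα
        rw [Finset.mem_filter] at hα
        have hαi : (α i : ℕ) < N := by
          have := le_sIdx α i
          omega
        exact decIdx_incIdx hαi
      · intro α' hα'
        rw [Finset.mem_filter] at hα'
        exact incIdx_decIdx hα'.2.1
      · intro α hα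
        rw [Finset.mem_filter] at hα
        have hαi : (α i : ℕ) < N := by
          have := le_sIdx α i
          omega
        have hmem : (incIdx α i) i = (⟨min ((α i : ℕ) + 1) N, by omega⟩ : Fin (N+1)) :=
          Function.update_self _ _ _
        have hpos : 1 ≤ ((incIdx α i) i : ℕ) := by
          rw [incIdx_apply, if_pos rfl]
          omega
        rw [if_pos hpos, decIdx_incIdx hαi]
        congr 1
        exact mderiv_perm hU hf (perm_cons_mIdxList hαi) hξ
    -- assemble
    have rhs_split : (∑ α : Fin d → Fin (N+1),
          coefC N Φ (n+1) α ξ * mderiv d (mIdxList d N α) f ξ)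
        = (∑ α : Fin d → Fin (N+1), (∑ i, pderiv' d i
            (fun η => Bf i Φ η * coefC N Φ n α η) ξ) * mderiv d (mIdxList d N α) f ξ)
          + ∑ α : Fin d → Fin (N+1), (∑ i,
              (if 1 ≤ (α i : ℕ) then Bf i Φ ξ * coefC N Φ n (decIdx α i) ξ else 0))
              * mderiv d (mIdxList d N α) f ξ := by
      rw [← Finset.sum_add_distrib]
      apply Finset.sum_congr rfl
      intro α _
      show ((∑ i, pderiv' d i (fun η => Bf i Φ η * coefC N Φ n α η) ξ)
          + ∑ i, (if 1 ≤ (α i : ℕ) then Bf i Φ ξ * coefC N Φ n (decIdx α i) ξ else 0))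
          * mderiv d (mIdxList d N α) f ξ = _
      rw [add_mul]
    rw [rhs_split]
    calc (∑ i, pderiv' d i (fun η => Bf i Φ η * (transpOp d Φ)^[n] f η) ξ)
        = ∑ i, ∑ α : Fin d → Fin (N+1), (pderiv' d i
            (fun η => Bf i Φ η * coefC N Φ n α η) ξ * mderiv d (mIdxList d N α) f ξ
          + (Bf i Φ ξ * coefC N Φ n α ξ) * mderiv d (i :: mIdxList d N α) f ξ) :=
          Finset.sum_congr rfl fun i _ => step1 i
      _ = (∑ i, ∑ α : Fin d → Fin (N+1), pderiv' d i
            (fun η => Bf i Φ η * coefC N Φ n α η) ξ * mderiv d (mIdxList d N α) f ξ)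
          + ∑ i, ∑ α : Fin d → Fin (N+1),
            (Bf i Φ ξ * coefC N Φ n α ξ) * mderiv d (i :: mIdxList d N α) f ξ := by
          rw [← Finset.sum_add_distrib]
          exact Finset.sum_congr rfl fun i _ => Finset.sum_add_distrib
      _ = (∑ α : Fin d → Fin (N+1), (∑ i, pderiv' d i
            (fun η => Bf i Φ η * coefC N Φ n α η) ξ) * mderiv d (mIdxList d N α) f ξ)
          + ∑ i, ∑ α : Fin d → Fin (N+1),
            (if 1 ≤ (α i : ℕ) then Bf i Φ ξ * coefC N Φ n (decIdx α i) ξ else 0)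
              * mderiv d (mIdxList d N α) f ξ := by
          congr 1
          · rw [Finset.sum_comm]
            exact Finset.sum_congr rfl fun α _ => by rw [Finset.sum_mul]
          · exact Finset.sum_congr rfl fun i _ => claim2 i
      _ = _ := by
          congr 1
          rw [Finset.sum_comm]
          exact Finset.sum_congr rfl fun α _ => by rw [Finset.sum_mul]

end Aux

theorem stmt12 (d N : ℕ) (hN : 1 ≤ N) :
    ∃ F : (Fin d → Fin (N + 1)) → List (Fin d) → ℝ → ℝ,
      (∀ α β, Monotone (F α β) ∧ ∀ x, 0 ≤ F α β x) ∧
      ∀ (Φ : EuclideanSpace ℝ (Fin d) → ℝ) (V : Set (EuclideanSpace ℝ (Fin d))),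
        ContDiff ℝ (⊤ : ℕ∞) Φ → IsOpen V →
        (∀ k : ℕ, BddAbove ((fun ξ => ‖iteratedFDeriv ℝ k Φ ξ‖) '' V)) →
        ∃ c : (Fin d → Fin (N + 1)) → EuclideanSpace ℝ (Fin d) → ℝ,
          (∀ α, ContDiffOn ℝ (⊤ : ℕ∞) (c α) {ξ ∈ V | gradient Φ ξ ≠ 0}) ∧
          (∀ f : EuclideanSpace ℝ (Fin d) → ℝ,
            ContDiffOn ℝ (⊤ : ℕ∞) f {ξ ∈ V | gradient Φ ξ ≠ 0} →
            ∀ ξ ∈ {ξ ∈ V | gradient Φ ξ ≠ 0},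
              (transpOp d Φ)^[N] f ξ =
                ∑ α ∈ Finset.univ.filter
                    (fun α : Fin d → Fin (N + 1) => ∑ i, (α i : ℕ) ≤ N),
                  c α ξ * mderivIdx d N α f ξ) ∧
          (∀ α : Fin d → Fin (N + 1), ∑ i, (α i : ℕ) ≤ N →
            ∀ β : List (Fin d), ∀ ξ ∈ {ξ ∈ V | gradient Φ ξ ≠ 0},
              |mderiv d β (c α) ξ| ≤
                F α β (phaseSemi d (N - (∑ i, (α i : ℕ)) + β.length + 1) V Φ) *
                  ∑ k ∈ Finset.Icc N (2 * N - (∑ i, (α i : ℕ)) + β.length),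
                    (‖gradient Φ ξ‖ ^ k)⁻¹) := by
  classical
  refine ⟨fun α β => if h : Aux.sIdx α ≤ N then
      Classical.choose ((Aux.coefC_good (d := d) N N α h β.length).2 β le_rfl)
    else fun _ => 0, ?_, ?_⟩
  · intro α β
    beta_reduce
    by_cases h : Aux.sIdx α ≤ N
    · rw [dif_pos h]
      obtain ⟨hm, hp, _⟩ :=
        Classical.choose_spec ((Aux.coefC_good (d := d) N N α h β.length).2 β le_rfl)
      exact ⟨hm, hp⟩
    · rw [dif_neg h]
      exact ⟨monotone_const, fun _ => le_rfl⟩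
  · intro Φ V hΦ hV hbdd
    have hyp : Aux.Hyp Φ V := ⟨hΦ, hV, hbdd⟩
    have huset : {ξ ∈ V | gradient Φ ξ ≠ 0} = Aux.uset Φ V := rfl
    refine ⟨fun α => Aux.coefC N Φ N α, ?_, ?_, ?_⟩
    · intro α
      rw [huset]
      exact Aux.coefC_smooth hyp N N α
    · intro f hf ξ hξ
      rw [huset] at hf hξ
      have he := Aux.expansion hyp N N le_rfl f hf ξ hξ
      rw [he]
      symm
      apply Finset.sum_subset (Finset.filter_subset _ _)
      intro α _ hα
      rw [Finset.mem_filter] at hα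
      push_neg at hα
      have hs : N < Aux.sIdx α := hα (Finset.mem_univ α)
      show Aux.coefC N Φ N α ξ * mderivIdx d N α f ξ = 0
      rw [Aux.coefC_zero N Φ N α hs]
      simp
    · intro α hα β ξ hξ
      rw [huset] at hξ
      have h : Aux.sIdx α ≤ N := hα
      beta_reduce
      rw [dif_pos h]
      obtain ⟨hm, hp, hb⟩ :=
        Classical.choose_spec ((Aux.coefC_good (d := d) N N α h β.length).2 β le_rfl)
      have hbd := hb Φ V hyp ξ hξ
      have hnat : N - (∑ i, ((α i : ℕ))) + β.length + 1
          = N - Aux.sIdx α + 1 + β.length := by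
        show N - Aux.sIdx α + β.length + 1 = _
        omega
      rw [hnat]
      exact hbd
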